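/- Let d be a positive integer and (β_n)_{n≥0} a sequence of nonnegative reals. Let ι = Σ_{n∈ℕ} (Fin n → Fin d) and define Ψ : ℝ^d → (ι → ℝ) by Ψ(x)(n, k) = √β_n · ∏_{j=1}^n x_{k(j)}. Let x, x' ∈ ℝ^d and assume the series Σ_{n=0}^∞ β_n ‖x‖^{2n} and Σ_{n=0}^∞ β_n ‖x'‖^{2n} converge. Then Ψ(x) and Ψ(x') lie in ℓ²(ι), and ⟨Ψ(x), Ψ(x')⟩_{ℓ²} = Σ_{n=0}^∞ β_n (⟨x, x'⟩)^n. -/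

import Mathlib

open scoped ENNReal RealInnerProductSpace

/-- The explicit feature map for a dot-product kernel `Q(⟨x,x'⟩) = Σ β_n ⟨x,x'⟩ⁿ`:
the entry of `Ψ(x)` at index `(n, k₁, …, k_n)` is `√β_n · x_{k₁} ⋯ x_{k_n}`. -/
noncomputable def featureMap (d : ℕ) (β : ℕ → ℝ) (x : EuclideanSpace ℝ (Fin d)) :
    (Σ n : ℕ, (Fin n → Fin d)) → ℝ :=
  fun i => Real.sqrt (β i.1) * ∏ j : Fin i.1, x (i.2 j)

lemma fiber_sum (d : ℕ) (β : ℕ → ℝ) (hβ : ∀ n, 0 ≤ β n)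
    (x y : EuclideanSpace ℝ (Fin d)) (n : ℕ) :
    ∑ k : Fin n → Fin d, featureMap d β x ⟨n, k⟩ * featureMap d β y ⟨n, k⟩
      = β n * (∑ i, x i * y i) ^ n := by
  simp only [featureMap]
  have : ∀ k : Fin n → Fin d,
      (Real.sqrt (β n) * ∏ j : Fin n, x (k j)) * (Real.sqrt (β n) * ∏ j : Fin n, y (k j))
        = β n * ∏ j : Fin n, (x (k j) * y (k j)) := by
    intro k
    rw [mul_mul_mul_comm, Real.mul_self_sqrt (hβ n), Finset.prod_mul_distrib]
  simp only [this, ← Finset.mul_sum]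
  rw [← Fintype.sum_pow (fun i => x i * y i) n]

lemma norm_sq_sum (d : ℕ) (x : EuclideanSpace ℝ (Fin d)) :
    ∑ i, x i * x i = ‖x‖ ^ 2 := by
  have := @real_inner_self_eq_norm_sq _ _ _ x
  rw [← this]
  simp [PiLp.inner_apply, RCLike.inner_apply]
  rw [← this, PiLp.inner_apply]
  simp only [RCLike.inner_apply, conj_trivial]

lemma memfm (d : ℕ) (β : ℕ → ℝ) (hβ : ∀ n, 0 ≤ β n) (x : EuclideanSpace ℝ (Fin d))
    (hx : Summable (fun n : ℕ => β n * ‖x‖ ^ (2 * n))) :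
    Memℓp (featureMap d β x) 2 := by
  apply memℓp_gen
  have h2 : ((2 : ℝ≥0∞)).toReal = ((2 : ℕ) : ℝ) := by norm_num
  have : (fun i => ‖featureMap d β x i‖ ^ (2 : ℝ≥0∞).toReal)
      = fun i => featureMap d β x i * featureMap d β x i := by
    funext i
    rw [h2, Real.rpow_natCast]
    rw [pow_two, ← abs_mul_abs_self]
    simp [Real.norm_eq_abs]
  rw [this]
  rw [summable_sigma_of_nonneg (fun i => mul_self_nonneg _)]
  refine ⟨fun n => (hasSum_fintype _).summable, ?_⟩
  have : (fun n : ℕ => ∑' k : Fin n → Fin d,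
      featureMap d β x ⟨n, k⟩ * featureMap d β x ⟨n, k⟩)
      = fun n : ℕ => β n * ‖x‖ ^ (2 * n) := by
    funext n
    rw [tsum_fintype, fiber_sum d β hβ x x n, norm_sq_sum, ← pow_mul]
  rw [this]
  exact hx

/-- **Explicit feature map for dot-product kernels (Section 5.2).** If the series
`Σ β_n ‖x‖^(2n)` and `Σ β_n ‖x'‖^(2n)` converge (with `β_n ≥ 0`), then `Ψ(x)` and
`Ψ(x')` lie in `ℓ²(ι)` for `ι = Σ_{n∈ℕ} (Fin n → Fin d)`, and their `ℓ²` inner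
product equals `Σ_{n=0}^∞ β_n ⟨x, x'⟩ⁿ`. -/
theorem featureMap_memℓ2_and_inner
    (d : ℕ) (hd : 0 < d) (β : ℕ → ℝ) (hβ : ∀ n, 0 ≤ β n)
    (x x' : EuclideanSpace ℝ (Fin d))
    (hx : Summable (fun n : ℕ => β n * ‖x‖ ^ (2 * n)))
    (hx' : Summable (fun n : ℕ => β n * ‖x'‖ ^ (2 * n))) :
    ∃ (h : Memℓp (featureMap d β x) 2) (h' : Memℓp (featureMap d β x') 2),
      ⟪(⟨featureMap d β x, h⟩ : lp (fun _ : (Σ n : ℕ, (Fin n → Fin d)) => ℝ) 2),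
        (⟨featureMap d β x', h'⟩ : lp (fun _ : (Σ n : ℕ, (Fin n → Fin d)) => ℝ) 2)⟫
        = ∑' n : ℕ, β n * ⟪x, x'⟫ ^ n := by
  have h := memfm d β hβ x hx
  have h' := memfm d β hβ x' hx'
  refine ⟨h, h', ?_⟩
  set f : lp (fun _ : (Σ n : ℕ, (Fin n → Fin d)) => ℝ) 2 := ⟨featureMap d β x, h⟩
  set g : lp (fun _ : (Σ n : ℕ, (Fin n → Fin d)) => ℝ) 2 := ⟨featureMap d β x', h'⟩
  have hsum : Summable fun i : (Σ n : ℕ, (Fin n → Fin d)) =>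
      featureMap d β x i * featureMap d β x' i := by
    have := lp.summable_inner (𝕜 := ℝ) f g
    simpa [RCLike.inner_apply, f, g, mul_comm] using this
  have hinner : ⟪f, g⟫ = ∑' i : (Σ n : ℕ, (Fin n → Fin d)),
      featureMap d β x i * featureMap d β x' i := by
    rw [lp.inner_eq_tsum]
    simp [RCLike.inner_apply, f, g, mul_comm]
  rw [hinner]
  rw [Summable.tsum_sigma' (fun n => (hasSum_fintype _).summable) hsum]
  congr 1
  funext n
  rw [tsum_fintype, fiber_sum d β hβ x x' n, PiLp.inner_apply]
  simp [RCLike.inner_apply, mul_comm]
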